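/- Fix positive reals $L, V^d, V^c, r$ (with $r = t R$ the communication capacity) and $\beta \in (0,1)$. Define for $\lambda \in [0,1]$: $D(\lambda) = \max\{\lambda L/V^d + \beta\lambda L/r,\ (1-\lambda)L/r + (1-\lambda)L/V^c\}$ if $\lambda \ge V^d/(V^d + r)$, and $D(\lambda) = (1-\lambda)L/r + \max\{\beta\lambda L/r,\ (1-\lambda)L/V^c\}$ if $\lambda < V^d/(V^d + r)$. If $r \ge \sqrt{\beta V^d V^c}$, then $D$ attains its minimum over $[0,1]$ at $\lambda^* = V^d(r + V^c)/(V^d V^c (1+\beta) + r(V^d + V^c))$. -/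

import Mathlib

theorem optimal_segmentation_comm_dominant
    (L Vd Vc r β : ℝ)
    (hL : 0 < L) (hVd : 0 < Vd) (hVc : 0 < Vc) (hr : 0 < r)
    (hβ0 : 0 < β) (hβ1 : β < 1)
    (D : ℝ → ℝ)
    (hD : ∀ lam : ℝ, D lam =
      if Vd / (Vd + r) ≤ lam then
        max (lam * L / Vd + β * lam * L / r)
            ((1 - lam) * L / r + (1 - lam) * L / Vc)
      else
        (1 - lam) * L / r + max (β * lam * L / r) ((1 - lam) * L / Vc))
    (hcase : Real.sqrt (β * Vd * Vc) ≤ r)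
    (lamstar : ℝ)
    (hlam : lamstar = Vd * (r + Vc) / (Vd * Vc * (1 + β) + r * (Vd + Vc))) :
    lamstar ∈ Set.Icc (0 : ℝ) 1 ∧
    ∀ l ∈ Set.Icc (0 : ℝ) 1, D lamstar ≤ D l := by
  have hA : 0 < Vd * Vc * (1 + β) + r * (Vd + Vc) := by positivity
  have hr2 : β * Vd * Vc ≤ r * r := by
    nlinarith [Real.mul_self_sqrt (show (0:ℝ) ≤ β * Vd * Vc by positivity),
      Real.sqrt_nonneg (β * Vd * Vc)]
  have hstar0 : 0 ≤ lamstar := by rw [hlam]; positivity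
  have hstar1 : lamstar ≤ 1 := by
    rw [hlam, div_le_one hA]; nlinarith [mul_pos (mul_pos hβ0 hVd) hVc, mul_pos hr hVc]
  have hbranch : Vd / (Vd + r) ≤ lamstar := by
    rw [hlam, div_le_div_iff₀ (by positivity) hA]; nlinarith
  have heq : lamstar * L / Vd + β * lamstar * L / r
      = (1 - lamstar) * L / r + (1 - lamstar) * L / Vc := by
    rw [hlam]; field_simp; ring
  have hDstar : D lamstar = (1 - lamstar) * L / r + (1 - lamstar) * L / Vc := by
    rw [hD, if_pos hbranch, heq, max_self]
  refine ⟨⟨hstar0, hstar1⟩, ?_⟩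
  intro l hl
  obtain ⟨hl0, hl1⟩ := hl
  rw [hD l, hDstar]
  by_cases hcmp : l ≤ lamstar
  · have hg : (1 - lamstar) * L / r + (1 - lamstar) * L / Vc
        ≤ (1 - l) * L / r + (1 - l) * L / Vc := by
      gcongr <;> linarith
    split_ifs with h
    · exact hg.trans (le_max_right _ _)
    · exact hg.trans (add_le_add le_rfl (le_max_right _ _))
  · push_neg at hcmp
    rw [if_pos (hbranch.trans hcmp.le)]
    have hf : lamstar * L / Vd + β * lamstar * L / r
        ≤ l * L / Vd + β * l * L / r := by
      gcongr <;> exact hcmp.le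
    rw [← heq]
    exact hf.trans (le_max_left _ _)
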